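/- Let W be a finite Coxeter group with simple reflections S = {s_1,…,s_k}, length function ℓ, and folding operation K ↦ K⁺(s) defined by K⁺(s) = {w ∈ W : s₊w ∈ K}, where s₊w = sw if ℓ(sw) < ℓ(w) and s₊w = w otherwise. Then there exists a finite sequence K_0 = {e}, K_1, …, K_N = W of subsets of W such that for each i there is a simple reflection s with K_{i+1} = K_i⁺(s). -/
import Mathlib


/-- Let `W` be a finite Coxeter group with simple reflections `S`, length function `ℓ`, and
folding operation `K ↦ K⁺(s) = {w : s₊w ∈ K}`, where `s₊w = sw` if `ℓ(sw) < ℓ(w)` and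
`s₊w = w` otherwise. Then there is a finite sequence `K₀ = {e}, K₁, …, K_N = W` of subsets of
`W` such that each `K_{i+1}` is `K_i⁺(s)` for some simple reflection `s`. -/
theorem exists_percolating_fold_sequence {B : Type*} {W : Type*} [Group W] [Finite W]
    (M : CoxeterMatrix B) (cs : CoxeterSystem M W) :
    ∃ (N : ℕ) (K : ℕ → Set W),
      K 0 = {1} ∧ K N = Set.univ ∧
      ∀ i < N, ∃ b : B, K (i + 1) =
        {w : W |
          (if cs.length (cs.simple b * w) < cs.length w then cs.simple b * w else w) ∈ K i} := by
  classical
  have : Fintype W := Fintype.ofFinite W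
  set F : B → W → W := fun b w =>
    if cs.length (cs.simple b * w) < cs.length w then cs.simple b * w else w with hF
  set G : List B → W → W := fun l => l.foldr (fun b f w => F b (f w)) id with hGdef
  have Gnil : ∀ w, G [] w = w := fun w => rfl
  have Gcons : ∀ b l w, G (b :: l) w = F b (G l w) := fun b l w => rfl
  have Gappend : ∀ l1 l2 w, G (l1 ++ l2) w = G l1 (G l2 w) := by
    intro l1
    induction l1 with
    | nil => intro l2 w; rfl
    | cons b t ih => intro l2 w; simp only [List.cons_append, Gcons, ih]
  have Fle : ∀ b w, cs.length (F b w) ≤ cs.length w := by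
    intro b w
    rw [hF]
    dsimp only
    split
    · omega
    · exact le_rfl
  -- existence of a full word
  have key : ∀ n : ℕ, ∀ l : List B, (∑ w : W, cs.length (G l w)) ≤ n →
      ∃ l' : List B, ∀ w, G l' w = 1 := by
    intro n
    induction n with
    | zero =>
      intro l h
      refine ⟨l, fun w => ?_⟩
      have h0 : cs.length (G l w) = 0 := by
        have := Finset.sum_le_sum_of_subset (Finset.subset_univ {w})
          (f := fun w => cs.length (G l w))
        simp only [Finset.sum_singleton] at this
        omega
      exact cs.length_eq_zero_iff.mp h0
    | succ n ih =>
      intro l h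
      by_cases hall : ∀ w, G l w = 1
      · exact ⟨l, hall⟩
      · push_neg at hall
        obtain ⟨w0, hw0⟩ := hall
        obtain ⟨b, hb⟩ := cs.exists_leftDescent_of_ne_one hw0
        have hlt : (∑ w : W, cs.length (G (b :: l) w)) < ∑ w : W, cs.length (G l w) := by
          apply Finset.sum_lt_sum
          · intro i _; rw [Gcons]; exact Fle b (G l i)
          · refine ⟨w0, Finset.mem_univ _, ?_⟩
            rw [CoxeterSystem.IsLeftDescent] at hb
            rw [Gcons, hF]
            dsimp only
            rw [if_pos hb]
            exact hb
        exact ih (b :: l) (by omega)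
  obtain ⟨l, hl⟩ := key (∑ w : W, cs.length (G [] w)) [] le_rfl
  refine ⟨l.length, fun i => {w | G (l.take i) w = 1}, ?_, ?_, ?_⟩
  · simp [Gnil, Set.ext_iff]
  · simp only [List.take_length]
    ext w; simp [hl w]
  · intro i hi
    refine ⟨l.get ⟨i, hi⟩, ?_⟩
    ext w
    have htake : l.take (i + 1) = l.take i ++ [l.get ⟨i, hi⟩] := by
      rw [List.take_succ]
      congr
      simp [List.getElem?_eq_getElem hi]
    simp only [Set.mem_setOf_eq, htake, Gappend]
    have : G [l.get ⟨i, hi⟩] w = F (l.get ⟨i, hi⟩) w := rfl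
    rw [this, hF]
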